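/- Let q be an odd prime with (5/q) = -1, and let α ∈ F_{q²} be a root of x² - x - 1 with α^{q+1} = -1. If e is the multiplicative order of α in F_{q²}^×, then 2(q+1)/e is an odd integer; in particular v₂(e) = 1 + v₂(q+1). -/
import Mathlib


theorem order_of_root_char_poly (q : ℕ) (hq : q.Prime) (hodd : Odd q)
    (F : Type*) [Field F] [Fintype F] (hcard : Fintype.card F = q ^ 2)
    (α : F) (hα : α ^ 2 = α + 1) (hfrob : α ^ (q + 1) = -1) :
    orderOf α ∣ 2 * (q + 1) ∧ Odd (2 * (q + 1) / orderOf α) ∧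
      padicValNat 2 (orderOf α) = 1 + padicValNat 2 (q + 1) := by
  obtain ⟨p, hp⟩ := CharP.exists F
  haveI := hp
  have hpp : p.Prime := CharP.char_is_prime F p
  have hne : (-1 : F) ≠ 1 := by
    intro h
    have h2 : ((2 : ℕ) : F) = 0 := by push_cast; linear_combination -h
    have hpd2 : p ∣ 2 := (CharP.cast_eq_zero_iff F p 2).mp h2
    have hcast : ((q ^ 2 : ℕ) : F) = 0 := by
      rw [← hcard]; exact FiniteField.cast_card_eq_zero F
    have hpdq : p ∣ q ^ 2 := (CharP.cast_eq_zero_iff F p _).mp hcast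
    have hpq : p = q := (Nat.prime_dvd_prime_iff_eq hpp hq).mp (hpp.dvd_of_dvd_pow hpdq)
    have hp2 : p = 2 := (Nat.prime_dvd_prime_iff_eq hpp Nat.prime_two).mp hpd2
    have := Nat.odd_iff.mp hodd
    omega
  have he2 : α ^ (2 * (q + 1)) = 1 := by
    rw [mul_comm, pow_mul, hfrob]; ring
  have hdvd : orderOf α ∣ 2 * (q + 1) := orderOf_dvd_of_pow_eq_one he2
  have hndvd : ¬ orderOf α ∣ (q + 1) := by
    intro h
    have h1 : α ^ (q + 1) = 1 := orderOf_dvd_iff_pow_eq_one.mp h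
    rw [hfrob] at h1
    exact hne h1
  have hepos : 0 < orderOf α := by
    refine (isOfFinOrder_iff_pow_eq_one.mpr ⟨2 * (q + 1), by omega, he2⟩).orderOf_pos
  obtain ⟨k, hk⟩ := hdvd
  have hkodd : Odd k := by
    rw [Nat.odd_iff]
    by_contra h
    have hk2 : k % 2 = 0 := by omega
    obtain ⟨m, hm⟩ := Nat.dvd_of_mod_eq_zero hk2
    have h2m : 2 * (q + 1) = 2 * (orderOf α * m) := by rw [hk, hm]; ring
    exact hndvd ⟨m, by omega⟩
  have hk0 : k ≠ 0 := by
    intro h; rw [h] at hk; omega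
  haveI : Fact (Nat.Prime 2) := ⟨Nat.prime_two⟩
  have h1 : padicValNat 2 (2 * (q + 1)) = 1 + padicValNat 2 (q + 1) := by
    rw [padicValNat.mul two_ne_zero (by omega), padicValNat.self (by norm_num)]
  have h2 : padicValNat 2 (orderOf α * k) = padicValNat 2 (orderOf α) := by
    rw [padicValNat.mul (hepos.ne') hk0]
    have hz : padicValNat 2 k = 0 :=
      padicValNat.eq_zero_of_not_dvd (by rw [Nat.odd_iff] at hkodd; omega)
    rw [hz, add_zero]
  refine ⟨⟨k, hk⟩, ?_, ?_⟩
  · rw [hk, Nat.mul_div_cancel_left _ hepos]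
    exact hkodd
  · rw [← h1, hk, h2]
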